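/- Let K be the additive Laplace kernel on ℝ defined by K(y) := L(y, v) for some v > 0. Then for every γ ≥ 1, the contraction coefficient of K under E_γ-divergence is trivial: η_γ(K) = 1. -/

import Mathlib

open MeasureTheory ProbabilityTheory Real

noncomputable def Egamma {Y : Type*} [MeasurableSpace Y] (γ : ℝ) (P Q : Measure Y) : ℝ :=
  ⨆ A : {A : Set Y // MeasurableSet A}, ((P A.1).toReal - γ * (Q A.1).toReal)

noncomputable def etaGamma {Y : Type*} [MeasurableSpace Y] (γ : ℝ) (K : Kernel Y Y) : ℝ :=
  ⨆ p : {p : Measure Y × Measure Y //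
      IsProbabilityMeasure p.1 ∧ IsProbabilityMeasure p.2 ∧ Egamma γ p.1 p.2 ≠ 0},
    Egamma γ (p.1.1.bind K) (p.1.2.bind K) / Egamma γ p.1.1 p.1.2

/-- The Laplace distribution on `ℝ` with mean `m` and scale `v` (variance `2v²`). -/
noncomputable def laplaceMeasure (m v : ℝ) : Measure ℝ :=
  volume.withDensity fun t => ENNReal.ofReal ((1 / (2 * v)) * Real.exp (-|t - m| / v))

open Set

section Helpers

lemma integrableOn_exp_neg_div_Ioi (v c : ℝ) (hv : 0 < v) :
    IntegrableOn (fun x => Real.exp (-(x / v))) (Ioi c) := by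
  have h := (integrableOn_Ioi_comp_mul_left_iff (fun x => Real.exp (-x)) c (inv_pos.mpr hv)).mpr
    (exp_neg_integrableOn_Ioi _ one_pos |>.congr_fun (by intro x _; simp) measurableSet_Ioi)
  simpa [div_eq_inv_mul] using h

lemma integral_exp_neg_div_Ioi (v c : ℝ) (hv : 0 < v) :
    ∫ x in Ioi c, Real.exp (-(x / v)) = v * Real.exp (-(c / v)) := by
  have h := integral_comp_mul_left_Ioi (fun x => Real.exp (-x)) c (inv_pos.mpr hv)
  simp only [smul_eq_mul, inv_inv] at h
  rw [show (fun x => Real.exp (-(x / v))) = fun x => Real.exp (-(v⁻¹ * x)) by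
      funext x; rw [div_eq_inv_mul]]
  rw [h, integral_exp_neg_Ioi]
  ring_nf

lemma integrableOn_exp_div_Iic (v c : ℝ) (hv : 0 < v) :
    IntegrableOn (fun x => Real.exp (x / v)) (Iic c) := by
  have A : MeasurableEmbedding fun x : ℝ => -x :=
    (Homeomorph.neg ℝ).isClosedEmbedding.measurableEmbedding
  have key : IntegrableOn (fun x => Real.exp (x / v)) (Iic c)
      (Measure.map (fun x : ℝ => -x) volume) := by
    rw [A.integrableOn_map_iff]
    have hpre : (fun x : ℝ => -x) ⁻¹' Iic c = Ici (-c) := by ext x; simp [neg_le]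
    rw [hpre]
    refine ((integrableOn_Ici_iff_integrableOn_Ioi).mpr
      (integrableOn_exp_neg_div_Ioi v (-c) hv)).congr_fun ?_ measurableSet_Ici
    intro x _; simp [Function.comp, neg_div]
  rwa [Measure.map_neg_eq_self (volume : Measure ℝ)] at key

lemma integral_exp_div_Iic (v c : ℝ) (hv : 0 < v) :
    ∫ x in Iic c, Real.exp (x / v) = v * Real.exp (c / v) := by
  have h := integral_comp_neg_Iic c (fun x => Real.exp (-(x / v)))
  simp only [neg_div, neg_neg] at h
  rw [h, integral_exp_neg_div_Ioi v (-c) hv, neg_div, neg_neg]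

lemma laplace_Iic_of_le (m v c : ℝ) (hv : 0 < v) (hc : c ≤ m) :
    laplaceMeasure m v (Iic c) = ENNReal.ofReal ((1/2) * Real.exp (-((m - c) / v))) := by
  rw [laplaceMeasure, withDensity_apply _ measurableSet_Iic]
  have hcong : ∀ t ∈ Iic c, (1 / (2 * v)) * Real.exp (-|t - m| / v)
      = (1 / (2 * v)) * Real.exp (-(m / v)) * Real.exp (t / v) := by
    intro t ht
    have : |t - m| = m - t := by
      rw [abs_of_nonpos (by linarith [mem_Iic.mp ht])]; ring
    rw [this, show -(m - t) / v = -(m / v) + t / v by ring, Real.exp_add]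
    ring
  have hint : IntegrableOn (fun t => (1 / (2 * v)) * Real.exp (-|t - m| / v)) (Iic c) := by
    refine MeasureTheory.IntegrableOn.congr_fun
      ((integrableOn_exp_div_Iic v c hv).const_mul ((1 / (2 * v)) * Real.exp (-(m / v))))
      (fun t ht => (hcong t ht).symm) measurableSet_Iic
  rw [← ofReal_integral_eq_lintegral_ofReal hint
    (ae_of_all _ fun t => by positivity)]
  congr 1
  rw [setIntegral_congr_fun measurableSet_Iic hcong, integral_const_mul,
    integral_exp_div_Iic v c hv]
  rw [show -((m - c) / v) = -(m / v) + c / v by ring, Real.exp_add]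
  field_simp

lemma laplace_Ioi_of_ge (m v c : ℝ) (hv : 0 < v) (hc : m ≤ c) :
    laplaceMeasure m v (Ioi c) = ENNReal.ofReal ((1/2) * Real.exp (-((c - m) / v))) := by
  rw [laplaceMeasure, withDensity_apply _ measurableSet_Ioi]
  have hcong : ∀ t ∈ Ioi c, (1 / (2 * v)) * Real.exp (-|t - m| / v)
      = (1 / (2 * v)) * Real.exp (m / v) * Real.exp (-(t / v)) := by
    intro t ht
    have : |t - m| = t - m := abs_of_nonneg (by linarith [mem_Ioi.mp ht])
    rw [this, show -(t - m) / v = m / v + -(t / v) by ring, Real.exp_add]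
    ring
  have hint : IntegrableOn (fun t => (1 / (2 * v)) * Real.exp (-|t - m| / v)) (Ioi c) := by
    refine MeasureTheory.IntegrableOn.congr_fun
      ((integrableOn_exp_neg_div_Ioi v c hv).const_mul ((1 / (2 * v)) * Real.exp (m / v)))
      (fun t ht => (hcong t ht).symm) measurableSet_Ioi
  rw [← ofReal_integral_eq_lintegral_ofReal hint
    (ae_of_all _ fun t => by positivity)]
  congr 1
  rw [setIntegral_congr_fun measurableSet_Ioi hcong, integral_const_mul,
    integral_exp_neg_div_Ioi v c hv]
  rw [show -((c - m) / v) = m / v + -(c / v) by ring, Real.exp_add]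
  field_simp

lemma laplace_isProb (m v : ℝ) (hv : 0 < v) : IsProbabilityMeasure (laplaceMeasure m v) := by
  constructor
  rw [← Iic_union_Ioi (a := m),
    measure_union (Iic_disjoint_Ioi le_rfl) measurableSet_Ioi,
    laplace_Iic_of_le m v m hv le_rfl, laplace_Ioi_of_ge m v m hv le_rfl]
  rw [← ENNReal.ofReal_add (by positivity) (by positivity)]
  norm_num

lemma laplace_Iic_of_ge (m v c : ℝ) (hv : 0 < v) (hc : m ≤ c) :
    (laplaceMeasure m v (Iic c)).toReal = 1 - (1/2) * Real.exp (-((c - m) / v)) := by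
  haveI := laplace_isProb m v hv
  have h : laplaceMeasure m v (Iic c) = 1 - laplaceMeasure m v (Ioi c) := by
    rw [← prob_compl_eq_one_sub measurableSet_Ioi, compl_Ioi]
  rw [h, laplace_Ioi_of_ge m v c hv hc,
    ENNReal.toReal_sub_of_le (by
      rw [← laplace_Ioi_of_ge m v c hv hc]; exact prob_le_one) ENNReal.one_ne_top]
  rw [ENNReal.toReal_one, ENNReal.toReal_ofReal (by positivity)]

variable {Y : Type*} [MeasurableSpace Y]

lemma Egamma_term_le_one {γ : ℝ} (hγ : 0 ≤ γ) (P Q : Measure Y) [IsProbabilityMeasure P]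
    (A : Set Y) : (P A).toReal - γ * (Q A).toReal ≤ 1 := by
  have h1 : (P A).toReal ≤ 1 := by
    simpa using ENNReal.toReal_mono ENNReal.one_ne_top (prob_le_one (μ := P) (s := A))
  have h2 : 0 ≤ γ * (Q A).toReal := mul_nonneg hγ ENNReal.toReal_nonneg
  linarith

lemma Egamma_bddAbove {γ : ℝ} (hγ : 0 ≤ γ) (P Q : Measure Y) [IsProbabilityMeasure P] :
    BddAbove (Set.range fun A : {A : Set Y // MeasurableSet A} =>
      ((P A.1).toReal - γ * (Q A.1).toReal)) := by
  refine ⟨1, ?_⟩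
  rintro x ⟨A, rfl⟩
  exact Egamma_term_le_one hγ P Q A.1

lemma Egamma_ge {γ : ℝ} (hγ : 0 ≤ γ) (P Q : Measure Y) [IsProbabilityMeasure P]
    {A : Set Y} (hA : MeasurableSet A) :
    (P A).toReal - γ * (Q A).toReal ≤ Egamma γ P Q :=
  le_ciSup (Egamma_bddAbove hγ P Q) (⟨A, hA⟩ : {A : Set Y // MeasurableSet A})

lemma Egamma_nonneg {γ : ℝ} (hγ : 0 ≤ γ) (P Q : Measure Y) [IsProbabilityMeasure P] :
    0 ≤ Egamma γ P Q := by
  have := Egamma_ge hγ P Q MeasurableSet.empty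
  simpa using this

lemma Egamma_le_one {γ : ℝ} (hγ : 0 ≤ γ) (P Q : Measure Y) [IsProbabilityMeasure P] :
    Egamma γ P Q ≤ 1 :=
  ciSup_le fun A => Egamma_term_le_one hγ P Q A.1

lemma Egamma_dirac {γ : ℝ} (hγ : 0 ≤ γ) {a b : Y} [MeasurableSingletonClass Y]
    (hab : a ≠ b) : Egamma γ (Measure.dirac a) (Measure.dirac b) = 1 := by
  refine le_antisymm (Egamma_le_one hγ _ _) ?_
  have h := Egamma_ge hγ (Measure.dirac a) (Measure.dirac b)
    (measurableSet_singleton a)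
  rw [Measure.dirac_apply' a (measurableSet_singleton a),
    Measure.dirac_apply' b (measurableSet_singleton a),
    Set.indicator_of_mem (mem_singleton a), Set.indicator_of_notMem (by simpa using hab.symm)]
    at h
  simpa using h

lemma Egamma_dpi {γ : ℝ} (hγ : 0 ≤ γ) (P Q : Measure Y) [IsProbabilityMeasure P]
    [IsProbabilityMeasure Q] (K : Kernel Y Y) [IsMarkovKernel K] :
    Egamma γ (P.bind K) (Q.bind K) ≤ Egamma γ P Q := by
  refine ciSup_le ?_
  rintro ⟨A, hA⟩
  set f : Y → ℝ := fun y => (K y A).toReal with hf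
  have hf_meas : Measurable f := (K.measurable_coe hA).ennreal_toReal
  have hf0 : ∀ y, 0 ≤ f y := fun y => ENNReal.toReal_nonneg
  have hf1 : ∀ y, f y ≤ 1 := fun y => by
    simpa using ENNReal.toReal_mono ENNReal.one_ne_top (prob_le_one (μ := K y) (s := A))
  have hInt : ∀ (μ : Measure Y) [IsProbabilityMeasure μ], Integrable f μ := by
    intro μ _
    refine (integrable_const (1:ℝ)).mono' hf_meas.aestronglyMeasurable (ae_of_all _ fun y => ?_)
    rw [Real.norm_of_nonneg (hf0 y)]
    exact hf1 y
  have hbind : ∀ (μ : Measure Y) [IsProbabilityMeasure μ],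
      ((μ.bind K) A).toReal = ∫ y, f y ∂μ := by
    intro μ _
    rw [Measure.bind_apply hA K.measurable.aemeasurable,
      ← integral_toReal (K.measurable_coe hA).aemeasurable
        (ae_of_all _ fun y => lt_of_le_of_lt prob_le_one ENNReal.one_lt_top)]
  have hlayer : ∀ (μ : Measure Y) [IsProbabilityMeasure μ],
      ∫ y, f y ∂μ = ∫ t in Ioc (0:ℝ) 1, (μ {y | t < f y}).toReal := by
    intro μ _
    rw [(hInt μ).integral_eq_integral_meas_lt (ae_of_all _ hf0)]
    refine setIntegral_eq_of_subset_of_forall_diff_eq_zero measurableSet_Ioi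
      Ioc_subset_Ioi_self ?_
    intro t ht
    have h1t : 1 < t := by
      rcases ht with ⟨h1, h2⟩
      simp only [mem_Ioc, not_and, not_le] at h2
      exact h2 h1
    have hempty : {y | t < f y} = ∅ := by
      ext y
      simp only [mem_setOf_eq, mem_empty_iff_false, iff_false, not_lt]
      exact (hf1 y).trans h1t.le
    simp [hempty]
  have tail_anti : ∀ (μ : Measure Y) [IsProbabilityMeasure μ],
      Antitone (fun t : ℝ => (μ {y | t < f y}).toReal) := by
    intro μ _ s t hst
    refine ENNReal.toReal_mono (measure_ne_top μ _) (measure_mono ?_)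
    intro y hy
    exact lt_of_le_of_lt hst hy
  have tail_int : ∀ (μ : Measure Y) [IsProbabilityMeasure μ],
      IntegrableOn (fun t : ℝ => (μ {y | t < f y}).toReal) (Ioc 0 1) := by
    intro μ _
    haveI : IsFiniteMeasure (volume.restrict (Ioc (0:ℝ) 1)) := by
      constructor
      rw [Measure.restrict_apply_univ]
      simp [Real.volume_Ioc]
    refine (integrable_const (1:ℝ)).mono'
      ((tail_anti μ).measurable.aestronglyMeasurable) (ae_of_all _ fun t => ?_)
    rw [Real.norm_of_nonneg ENNReal.toReal_nonneg]
    simpa using ENNReal.toReal_mono ENNReal.one_ne_top (prob_le_one (μ := μ))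
  rw [hbind P, hbind Q, hlayer P, hlayer Q, ← integral_const_mul,
    ← integral_sub (tail_int P) ((tail_int Q).const_mul γ)]
  have hvol : volume (Ioc (0:ℝ) 1) < ⊤ := by simp [Real.volume_Ioc]
  calc ∫ t in Ioc (0:ℝ) 1, ((P {y | t < f y}).toReal - γ * (Q {y | t < f y}).toReal)
      ≤ ∫ _t in Ioc (0:ℝ) 1, Egamma γ P Q := by
        refine setIntegral_mono_on ((tail_int P).sub ((tail_int Q).const_mul γ))
          (integrableOn_const hvol.ne) measurableSet_Ioc ?_
        intro t _
        exact Egamma_ge hγ P Q (hf_meas measurableSet_Ioi)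
    _ = Egamma γ P Q := by
        rw [setIntegral_const]
        simp [Real.volume_Ioc]

end Helpers

/-- The contraction coefficient under `E_γ`-divergence of the
(unconstrained) additive Laplace kernel `K(y) = L(y, v)` on `ℝ` is trivial:
`η_γ(K) = 1`. -/
theorem etaGamma_additive_laplace_eq_one (v : ℝ) (hv : 0 < v)
    (K : Kernel ℝ ℝ) [IsMarkovKernel K]
    (hK : ∀ y, K y = laplaceMeasure y v) (γ : ℝ) (hγ : 1 ≤ γ) :
    etaGamma γ K = 1 := by
  have hγ0 : (0:ℝ) ≤ γ := zero_le_one.trans hγ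
  haveI hne : Nonempty {p : Measure ℝ × Measure ℝ //
      IsProbabilityMeasure p.1 ∧ IsProbabilityMeasure p.2 ∧ Egamma γ p.1 p.2 ≠ 0} := by
    refine ⟨⟨(Measure.dirac 0, Measure.dirac 1), inferInstance, inferInstance, ?_⟩⟩
    rw [Egamma_dirac hγ0 (by norm_num : (0:ℝ) ≠ 1)]
    exact one_ne_zero
  have hratio : ∀ p : {p : Measure ℝ × Measure ℝ //
      IsProbabilityMeasure p.1 ∧ IsProbabilityMeasure p.2 ∧ Egamma γ p.1 p.2 ≠ 0},
      Egamma γ (p.1.1.bind K) (p.1.2.bind K) / Egamma γ p.1.1 p.1.2 ≤ 1 := by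
    rintro ⟨⟨P, Q⟩, hP, hQ, hne0⟩
    haveI := hP; haveI := hQ
    have hden : 0 < Egamma γ P Q := lt_of_le_of_ne (Egamma_nonneg hγ0 P Q) (Ne.symm hne0)
    exact (div_le_one hden).mpr (Egamma_dpi hγ0 P Q K)
  have hbdd : BddAbove (Set.range fun p : {p : Measure ℝ × Measure ℝ //
      IsProbabilityMeasure p.1 ∧ IsProbabilityMeasure p.2 ∧ Egamma γ p.1 p.2 ≠ 0} =>
      Egamma γ (p.1.1.bind K) (p.1.2.bind K) / Egamma γ p.1.1 p.1.2) := by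
    refine ⟨1, ?_⟩
    rintro x ⟨p, rfl⟩
    exact hratio p
  refine le_antisymm (ciSup_le hratio) ?_
  refine le_of_forall_pos_le_add fun ε hε => ?_
  obtain ⟨n, hn⟩ : ∃ n : ℕ, ((1+γ)/2) * Real.exp (-(((n:ℝ)+1)/v)) < ε := by
    have h1 : Filter.Tendsto (fun n : ℕ => ((n:ℝ)+1)/v) Filter.atTop Filter.atTop :=
      (Filter.tendsto_div_const_atTop_of_pos hv).mpr
        (Filter.tendsto_atTop_add_const_right _ 1 tendsto_natCast_atTop_atTop)
    have h2 : Filter.Tendsto (fun n : ℕ => ((1+γ)/2) * Real.exp (-(((n:ℝ)+1)/v)))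
        Filter.atTop (nhds (((1+γ)/2) * 0)) :=
      ((Real.tendsto_exp_atBot.comp (Filter.tendsto_neg_atBot_iff.mpr h1)).const_mul _)
    rw [mul_zero] at h2
    exact (h2.eventually_lt_const hε).exists
  set c : ℝ := (n:ℝ) + 1 with hcdef
  have hcpos : 0 < c := by positivity
  set b : ℝ := 2 * c with hbdef
  have hbpos : 0 < b := by positivity
  haveI := laplace_isProb 0 v hv
  haveI := laplace_isProb b v hv
  have hEd : Egamma γ (Measure.dirac (0:ℝ)) (Measure.dirac b) = 1 :=
    Egamma_dirac hγ0 (ne_of_lt hbpos)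
  have hb1 : (Measure.dirac (0:ℝ)).bind K = laplaceMeasure 0 v := by
    rw [Measure.dirac_bind K.measurable, hK]
  have hb2 : (Measure.dirac b).bind K = laplaceMeasure b v := by
    rw [Measure.dirac_bind K.measurable, hK]
  have hr : Egamma γ ((Measure.dirac (0:ℝ)).bind K) ((Measure.dirac b).bind K) /
      Egamma γ (Measure.dirac (0:ℝ)) (Measure.dirac b) ≤ etaGamma γ K :=
    le_ciSup hbdd ⟨(Measure.dirac 0, Measure.dirac b), inferInstance, inferInstance, by
      rw [hEd]; exact one_ne_zero⟩
  rw [hb1, hb2, hEd, div_one] at hr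
  have hterm := Egamma_ge hγ0 (laplaceMeasure 0 v) (laplaceMeasure b v)
    (measurableSet_Iic (a := c))
  rw [laplace_Iic_of_ge 0 v c hv hcpos.le,
    laplace_Iic_of_le b v c hv (by rw [hbdef]; linarith),
    ENNReal.toReal_ofReal (by positivity)] at hterm
  have e1 : c - (0:ℝ) = c := sub_zero c
  have e2 : b - c = c := by rw [hbdef]; ring
  rw [e1, e2] at hterm
  have hc2 : ((1+γ)/2) * Real.exp (-(c/v)) < ε := hn
  linarith [hterm, hr]
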